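/- For n variables z_1,...,z_n, the identity ∑_{k=0}^n (e_k(z)^2 - e_{k-1}(z)e_{k+1}(z)) = e_n(z) · ∑_{k=0}^{⌊n/2⌋} C_k · e_{n-2k}(z_1 + 1/z_1, ..., z_n + 1/z_n) holds, where C_k = binom(2k,k)/(k+1) is the k-th Catalan number and e_j denotes the elementary symmetric polynomial (with e_j = 0 for j outside {0,...,n}). -/

import Mathlib

open Finset
namespace Stmt3Aux
variable {K : Type*} [Field K]




variable {K : Type*} [Field K]

/-- elementary symmetric polynomial of a list -/
def E : List K → ℕ → K
  | _, 0 => 1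
  | [], _+1 => 0
  | z :: l, k+1 => E l (k+1) + z * E l k

@[simp] lemma E_zero (l : List K) : E l 0 = 1 := by cases l <;> rfl

@[simp] lemma E_nil_succ (k : ℕ) : E ([] : List K) (k+1) = 0 := rfl

lemma E_cons_succ (z : K) (l : List K) (k : ℕ) :
    E (z :: l) (k+1) = E l (k+1) + z * E l k := rfl

lemma E_eq_zero {l : List K} {k : ℕ} (h : l.length < k) : E l k = 0 := by
  induction l generalizing k with
  | nil => cases k with
    | zero => omega
    | succ k => rfl
  | cons z l ih =>
    cases k with
    | zero => simp at h
    | succ k =>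
      simp only [List.length_cons] at h
      rw [E_cons_succ, ih (by omega), ih (by omega), mul_zero, add_zero]

lemma E_length (l : List K) : E l l.length = l.prod := by
  induction l with
  | nil => rfl
  | cons z l ih =>
    simp only [List.length_cons, E_cons_succ, E_eq_zero (Nat.lt_succ_self _), List.prod_cons,
      zero_add, ih]

/-- `E` with integer index, zero for negative indices. -/
def Ez (l : List K) (j : ℤ) : K := if 0 ≤ j then E l j.toNat else 0

@[simp] lemma Ez_natCast (l : List K) (k : ℕ) : Ez l (k : ℤ) = E l k := by
  simp [Ez]

lemma Ez_eq_zero_of_neg {l : List K} {j : ℤ} (h : j < 0) : Ez l j = 0 := by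
  simp [Ez, not_le.mpr h]

lemma Ez_eq_zero_of_lt {l : List K} {j : ℤ} (h : (l.length : ℤ) < j) : Ez l j = 0 := by
  rw [Ez, if_pos (by omega)]
  exact E_eq_zero (by omega)

lemma Ez_cons (z : K) (l : List K) (j : ℤ) :
    Ez (z :: l) j = Ez l j + z * Ez l (j - 1) := by
  rcases lt_trichotomy j 0 with h | h | h
  · rw [Ez_eq_zero_of_neg h, Ez_eq_zero_of_neg h, Ez_eq_zero_of_neg (by omega), mul_zero, add_zero]
  · subst h
    rw [Ez_eq_zero_of_neg (by norm_num : (0:ℤ) - 1 < 0), mul_zero, add_zero]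
    simp [Ez]
  · obtain ⟨k, rfl⟩ : ∃ k : ℕ, j = (k : ℤ) + 1 := ⟨(j-1).toNat, by omega⟩
    have : ((k : ℤ) + 1) - 1 = (k : ℤ) := by ring
    rw [this, show ((k:ℤ)+1) = ((k+1 : ℕ) : ℤ) by push_cast; ring]
    simp only [Ez_natCast]
    exact E_cons_succ z l k



def A (l : List K) (m : ℤ) : K := ∑ k ∈ Finset.range (l.length + 1), Ez l k * Ez l (k + m)

lemma A_eq_sum (l : List K) (m : ℤ) {N : ℕ} (h : l.length + 1 ≤ N) :
    ∑ k ∈ range N, Ez l (k : ℤ) * Ez l ((k : ℤ) + m) = A l m := by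
  rw [A]
  symm
  apply Finset.sum_subset (Finset.range_subset_range.mpr h)
  intro x _ hx
  rw [mem_range, not_lt] at hx
  rw [Ez_eq_zero_of_lt (by exact_mod_cast Nat.lt_of_lt_of_le (Nat.lt_succ_self _) hx), zero_mul]

lemma A_cons (z : K) (l : List K) (m : ℤ) :
    A (z :: l) m = (1 + z ^ 2) * A l m + z * (A l (m - 1) + A l (m + 1)) := by
  have expand : ∀ k ∈ range (l.length + 1 + 1),
      Ez (z :: l) (k : ℤ) * Ez (z :: l) ((k : ℤ) + m)
      = Ez l k * Ez l ((k : ℤ) + m) + z * (Ez l k * Ez l ((k : ℤ) + (m - 1)))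
        + z * (Ez l ((k : ℤ) - 1) * Ez l ((k : ℤ) + m))
        + z ^ 2 * (Ez l ((k : ℤ) - 1) * Ez l ((k : ℤ) + (m - 1))) := by
    intro k _
    rw [Ez_cons, Ez_cons, show (k:ℤ) + m - 1 = (k:ℤ) + (m - 1) from by ring]
    ring
  rw [A, List.length_cons, Finset.sum_congr rfl expand, Finset.sum_add_distrib,
    Finset.sum_add_distrib, Finset.sum_add_distrib]
  have S1 : ∑ k ∈ range (l.length + 1 + 1), Ez l (k:ℤ) * Ez l ((k:ℤ) + m) = A l m :=
    A_eq_sum l m (by omega)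
  have S2 : ∑ k ∈ range (l.length + 1 + 1), z * (Ez l (k:ℤ) * Ez l ((k:ℤ) + (m-1)))
      = z * A l (m - 1) := by
    rw [← Finset.mul_sum, A_eq_sum l (m-1) (by omega)]
  have S34 : ∀ c : K, ∀ m' : ℤ, ∑ k ∈ range (l.length + 1 + 1),
      c * (Ez l ((k:ℤ) - 1) * Ez l ((k:ℤ) + m')) = c * A l (m' + 1) := by
    intro c m'
    rw [Finset.sum_range_succ']
    have hneg : Ez l (((0:ℕ):ℤ) - 1) = 0 := Ez_eq_zero_of_neg (by norm_num)
    rw [hneg, zero_mul, mul_zero, add_zero, ← Finset.mul_sum]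
    congr 1
    rw [← A_eq_sum l (m' + 1) (le_refl _)]
    apply Finset.sum_congr rfl
    intro i _
    rw [show ((i + 1 : ℕ) : ℤ) - 1 = (i : ℤ) from by push_cast; ring,
      show ((i + 1 : ℕ) : ℤ) + m' = (i : ℤ) + (m' + 1) from by push_cast; ring]
  rw [S1, S2, S34 z m, S34 (z^2) (m-1), show m - 1 + 1 = m from by ring]
  ring

lemma A_neg_one (l : List K) : A l (-1) = A l 1 := by
  rw [A, A, Finset.sum_range_succ', Finset.sum_range_succ]
  have h0 : Ez l (((0:ℕ):ℤ) + -1) = 0 := Ez_eq_zero_of_neg (by norm_num)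
  have hn : Ez l ((l.length : ℤ) + 1) = 0 :=
    Ez_eq_zero_of_lt (by omega)
  rw [h0, hn, mul_zero, mul_zero, add_zero, add_zero]
  apply Finset.sum_congr rfl
  intro i _
  rw [show ((i + 1 : ℕ) : ℤ) + -1 = (i : ℤ) from by push_cast; ring, mul_comm]
  push_cast
  ring


/-- ballot numbers: B m k = C(m+2k,k) - C(m+2k,k-1), as integers -/
def B (m k : ℕ) : ℤ :=
  ((m + 2*k).choose k : ℤ) - if k = 0 then 0 else ((m + 2*k).choose (k-1) : ℤ)

@[simp] lemma B_zero_right (m : ℕ) : B m 0 = 1 := by simp [B]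

lemma B_rec (m k : ℕ) : B (m+1) (k+1) = B m (k+1) + B (m+2) k := by
  rcases k with _ | k
  · simp only [B, if_neg (Nat.one_ne_zero), if_pos rfl, Nat.sub_self,
      Nat.choose_zero_right, Nat.choose_one_right]
    push_cast
    rw [Nat.choose_one_right, Nat.choose_one_right]
    push_cast
    ring
  · simp only [B, if_neg (Nat.succ_ne_zero _), Nat.succ_sub_one]
    have p1 : ((m + 1 + 2*(k+2)).choose (k+2) : ℤ)
        = (m + 2*(k+2)).choose (k+1) + (m + 2*(k+2)).choose (k+2) := by
      rw [show m + 1 + 2*(k+2) = (m + 2*(k+2)) + 1 from by ring]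
      exact_mod_cast Nat.choose_succ_succ (m + 2*(k+2)) (k+1)
    have p2 : ((m + 1 + 2*(k+2)).choose (k+1) : ℤ)
        = (m + 2*(k+2)).choose k + (m + 2*(k+2)).choose (k+1) := by
      rw [show m + 1 + 2*(k+2) = (m + 2*(k+2)) + 1 from by ring]
      exact_mod_cast Nat.choose_succ_succ (m + 2*(k+2)) k
    rw [p1, p2, show m + 2 + 2*(k+1) = m + 2*(k+2) from by ring]
    ring

lemma B_one (k : ℕ) : B 1 k = B 0 (k+1) := by
  rcases k with _ | k
  · simp [B]
  · simp only [B, if_neg (Nat.succ_ne_zero _), Nat.succ_sub_one]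
    have p1 : ((0 + 2*(k+2)).choose (k+2) : ℤ)
        = (2*k+3).choose (k+1) + (2*k+3).choose (k+2) := by
      rw [show 0 + 2*(k+2) = (2*k+3) + 1 from by ring]
      exact_mod_cast Nat.choose_succ_succ (2*k+3) (k+1)
    have p2 : ((0 + 2*(k+2)).choose (k+1) : ℤ)
        = (2*k+3).choose k + (2*k+3).choose (k+1) := by
      rw [show 0 + 2*(k+2) = (2*k+3) + 1 from by ring]
      exact_mod_cast Nat.choose_succ_succ (2*k+3) k
    have psym : ((2*k+3).choose (k+2) : ℤ) = (2*k+3).choose (k+1) := by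
      exact_mod_cast Nat.choose_symm_half (k+1)
    rw [p1, p2, psym, show 1 + 2*(k+1) = 2*k+3 from by ring]
    ring

lemma B_zero_left (k : ℕ) : B 0 k = (catalan k : ℤ) := by
  rcases k with _ | k
  · simp [B]
  · have h1 : ((2*(k+1)+1) : ℤ) * ((2*(k+1)).choose k)
        = ((2*(k+1)+1).choose (k+1)) * (k+1) := by
      exact_mod_cast Nat.add_one_mul_choose_eq (2*(k+1)) k
    have h2 : ((2*(k+1)+1) : ℤ) * ((2*(k+1)).choose (k+1))
        = ((2*(k+1)+1).choose (k+2)) * (k+2) := by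
      exact_mod_cast Nat.add_one_mul_choose_eq (2*(k+1)) (k+1)
    have psym : (((2*(k+1)+1).choose (k+2)) : ℤ) = (2*(k+1)+1).choose (k+1) := by
      exact_mod_cast Nat.choose_symm_half (k+1)
    have hcat : ((k+1+1 : ℕ) : ℤ) * (catalan (k+1) : ℤ) = ((2*(k+1)).choose (k+1) : ℤ) := by
      have := succ_mul_catalan_eq_centralBinom (k+1)
      rw [Nat.centralBinom] at this
      exact_mod_cast this
    have hkey : ((k:ℤ)+2) * B 0 (k+1) = ((2*(k+1)).choose (k+1) : ℤ) := by
      simp only [B, if_neg (Nat.succ_ne_zero _), Nat.succ_sub_one, Nat.zero_add]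
      have hne : ((2*(k+1)+1) : ℤ) ≠ 0 := by positivity
      have expand : ((2*(k+1)+1) : ℤ) * (((k:ℤ)+2) * (((2*(k+1)).choose (k+1) : ℤ)
          - ((2*(k+1)).choose k : ℤ)))
          = ((2*(k+1)+1) : ℤ) * (((2*(k+1)).choose (k+1)) : ℤ) := by
        rw [mul_sub, mul_sub]
        rw [show ((2*(k+1)+1) : ℤ) * (((k:ℤ)+2) * ((2*(k+1)).choose (k+1) : ℤ))
            = ((k:ℤ)+2) * (((2*(k+1)+1) : ℤ) * ((2*(k+1)).choose (k+1) : ℤ)) from by ring, h2,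
          show ((2*(k+1)+1) : ℤ) * (((k:ℤ)+2) * ((2*(k+1)).choose k : ℤ))
            = ((k:ℤ)+2) * (((2*(k+1)+1) : ℤ) * ((2*(k+1)).choose k : ℤ)) from by ring, h1, psym]
        ring
      exact mul_left_cancel₀ hne expand
    have h3 : ((k:ℤ)+2) * B 0 (k+1) = ((k:ℤ)+2) * (catalan (k+1) : ℤ) := by
      rw [hkey, ← hcat]; push_cast; ring
    exact mul_left_cancel₀ (by positivity) h3


def D (l : List K) (j : ℤ) : K := Ez (l.map (fun z => z + z⁻¹)) ((l.length : ℤ) - j)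

lemma D_eq_zero_of_lt {l : List K} {j : ℤ} (h : (l.length : ℤ) < j) : D l j = 0 :=
  Ez_eq_zero_of_neg (by omega)

lemma D_eq_zero_of_neg {l : List K} {j : ℤ} (h : j < 0) : D l j = 0 :=
  Ez_eq_zero_of_lt (by rw [List.length_map]; omega)

lemma D_cons (z : K) (l : List K) (j : ℤ) :
    D (z :: l) j = D l (j - 1) + (z + z⁻¹) * D l j := by
  rw [D, D, D, List.map_cons, Ez_cons, List.length_cons]
  rw [show ((l.length + 1 : ℕ) : ℤ) - j = (l.length : ℤ) - (j - 1) from by push_cast; ring,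
    show ((l.length : ℤ)) - (j - 1) - 1 = (l.length : ℤ) - j from by ring]

lemma B_rec' (m k : ℕ) :
    B (m+1) k = B m k + (if k = 0 then 0 else B (m+2) (k-1)) := by
  rcases k with _ | k
  · simp
  · rw [if_neg (Nat.succ_ne_zero _), Nat.succ_sub_one]
    exact B_rec m k

lemma Ez_nil (j : ℤ) : Ez ([] : List K) j = if j = 0 then 1 else 0 := by
  rcases lt_trichotomy j 0 with h | h | h
  · rw [Ez_eq_zero_of_neg h, if_neg (by omega)]
  · subst h
    simp [Ez]
  · rw [Ez_eq_zero_of_lt (by simp; omega), if_neg (by omega)]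

lemma key (l : List K) (hl : ∀ x ∈ l, x ≠ 0) (m : ℕ) :
    A l (m : ℤ) - A l ((m : ℤ) + 2) =
      l.prod * ∑ k ∈ Finset.range (l.length + 1),
        (B m k : K) * D l ((m : ℤ) + 2 * k) := by
  induction l generalizing m with
  | nil =>
    have hA : ∀ j : ℤ, A ([] : List K) j = Ez [] j := by
      intro j
      rw [A]
      simp only [List.length_nil, zero_add, Finset.range_one, Finset.sum_singleton,
        Nat.cast_zero]
      rw [show Ez ([]:List K) ((0:ℤ)) = 1 from by simp [Ez], one_mul]
      try congr 1
      try omega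
    rw [hA, hA, Ez_nil, Ez_nil]
    simp only [List.length_nil, List.prod_nil, zero_add, Finset.range_one,
      Finset.sum_singleton, Nat.cast_zero, one_mul, mul_zero, add_zero, B_zero_right,
      Int.cast_one]
    rw [D, List.map_nil]
    simp only [List.length_nil, Nat.cast_zero]
    rw [Ez_nil]
    rcases Nat.eq_zero_or_pos m with hm | hm
    · subst hm
      norm_num
    · rw [if_neg (by exact_mod_cast hm.ne'), if_neg (by push_cast; omega),
        if_neg (by push_cast; omega), sub_zero]
  | cons z l ih =>
    have hz : z ≠ 0 := hl z List.mem_cons_self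
    have hl' : ∀ x ∈ l, x ≠ 0 := fun x hx => hl x (List.mem_cons_of_mem z hx)
    rw [A_cons, A_cons, List.prod_cons, List.length_cons]
    have hD : ∀ k ∈ Finset.range (l.length+1+1), (B m k : K) * D (z::l) ((m:ℤ) + 2*k)
        = (B m k : K) * D l ((m:ℤ) + 2*k - 1) + (B m k : K) * ((z+z⁻¹) * D l ((m:ℤ)+2*k)) := by
      intro k _
      rw [D_cons]
      ring
    rw [Finset.sum_congr rfl hD, Finset.sum_add_distrib]
    have hT2 : ∑ k ∈ Finset.range (l.length+1+1), (B m k : K) * ((z+z⁻¹) * D l ((m:ℤ)+2*k))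
        = (z+z⁻¹) * ∑ k ∈ Finset.range (l.length+1), (B m k : K) * D l ((m:ℤ)+2*k) := by
      rw [Finset.sum_range_succ, D_eq_zero_of_lt (by push_cast <;> omega), mul_zero, mul_zero,
        add_zero, Finset.mul_sum]
      apply Finset.sum_congr rfl
      intro k _
      ring
    rw [hT2]
    rcases m with _ | m'
    · -- m = 0
      have hT1 : ∑ k ∈ Finset.range (l.length+1+1),
          (B 0 k : K) * D l (((0:ℕ):ℤ) + 2*k - 1)
          = ∑ k ∈ Finset.range (l.length+1), (B 1 k : K) * D l ((1:ℤ) + 2*k) := by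
        rw [Finset.sum_range_succ']
        rw [show (((0:ℕ):ℤ) + 2*((0:ℕ):ℤ) - 1) = (-1 : ℤ) from by norm_num,
          D_eq_zero_of_neg (by norm_num), mul_zero, add_zero]
        apply Finset.sum_congr rfl
        intro i _
        rw [show ((0:ℕ):ℤ) + 2*((i+1:ℕ):ℤ) - 1 = (1:ℤ) + 2*(i:ℤ) from by omega,
          ← B_one i]
      rw [hT1]
      have h0 := ih hl' 0
      have h1 := ih hl' 1
      push_cast at h0 h1 ⊢
      rw [A_neg_one]
      have hzz : z * (z + z⁻¹) = z^2 + 1 := by field_simp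
      linear_combination (1+z^2) * h0 + z * h1
        - l.prod * (∑ k ∈ Finset.range (l.length+1), ((B 0 k : ℤ) : K) * D l ((0:ℤ) + 2*(k:ℤ))) * hzz
    · -- m = m'+1
      have hT1 : ∑ k ∈ Finset.range (l.length+1+1),
          (B (m'+1) k : K) * D l (((m'+1:ℕ):ℤ) + 2*k - 1)
          = (∑ k ∈ Finset.range (l.length+1), (B m' k : K) * D l ((m':ℤ) + 2*k))
            + ∑ k ∈ Finset.range (l.length+1), (B (m'+2) k : K) * D l (((m'+2):ℤ) + 2*k) := by
        have hsplit : ∀ k ∈ Finset.range (l.length+1+1),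
            (B (m'+1) k : K) * D l (((m'+1:ℕ):ℤ) + 2*k - 1)
            = (B m' k : K) * D l ((m':ℤ) + 2*k)
              + (if k = 0 then 0 else (B (m'+2) (k-1) : K)) * D l (((m'+1:ℕ):ℤ) + 2*k - 1) := by
          intro k _
          rw [B_rec' m' k]
          push_cast
          rcases k with _ | i
          · simp
          · rw [show (m':ℤ) + 1 + 2*((i+1:ℕ):ℤ) - 1 = (m':ℤ) + 2*((i+1:ℕ):ℤ) from by ring]
            ring
        rw [Finset.sum_congr rfl hsplit, Finset.sum_add_distrib]
        congr 1
        · rw [Finset.sum_range_succ, D_eq_zero_of_lt (by push_cast <;> omega), mul_zero, add_zero]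
        · rw [Finset.sum_range_succ']
          rw [if_pos rfl, zero_mul, add_zero]
          apply Finset.sum_congr rfl
          intro i _
          rw [if_neg (Nat.succ_ne_zero _), Nat.succ_sub_one]
          congr 1
          rw [show ((m'+1:ℕ):ℤ) + 2*((i+1:ℕ):ℤ) - 1 = ((m'+2):ℤ) + 2*(i:ℤ) from by
            push_cast; ring]
      rw [hT1]
      have h0 := ih hl' m'
      have h1 := ih hl' (m'+1)
      have h2 := ih hl' (m'+2)
      push_cast at h0 h1 h2 ⊢
      have hzz : z * (z + z⁻¹) = z^2 + 1 := by field_simp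
      rw [show (m':ℤ)+1-1 = (m':ℤ) from by ring,
        show (m':ℤ)+1+2-1 = (m':ℤ)+2 from by ring,
        show (m':ℤ)+1+1 = (m':ℤ)+2 from by ring,
        show (m':ℤ)+1+2+1 = (m':ℤ)+2+2 from by ring]
      linear_combination (1+z^2) * h1 + z * h0 + z * h2
        - l.prod * (∑ k ∈ Finset.range (l.length+1),
            ((B (m'+1) k : ℤ) : K) * D l ((m':ℤ) + 1 + 2*(k:ℤ))) * hzz

lemma esymm_coe (l : List K) (k : ℕ) : (l : Multiset K).esymm k = E l k := by
  induction l generalizing k with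
  | nil =>
    cases k with
    | zero => simp [Multiset.esymm]
    | succ k => simp [Multiset.esymm, Multiset.powersetCard_zero_right]
  | cons z l ih =>
    cases k with
    | zero => simp [Multiset.esymm]
    | succ k =>
      have hc : ((z :: l : List K) : Multiset K) = z ::ₘ (l : Multiset K) := rfl
      rw [hc, Multiset.esymm, Multiset.powersetCard_cons, Multiset.map_add, Multiset.sum_add,
        Multiset.map_map, E_cons_succ, ← ih, ← ih]
      congr 1
      have : ∀ t ∈ Multiset.powersetCard k (l : Multiset K),
          (Multiset.prod ∘ Multiset.cons z) t = z * t.prod := by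
        intro t _
        simp [Multiset.prod_cons]
      rw [Multiset.map_congr rfl this, Multiset.sum_map_mul_left]
      rfl

lemma sum_powersetCard (n k : ℕ) (g : Fin n → K) :
    ∑ S ∈ (Finset.univ : Finset (Fin n)).powersetCard k, ∏ i ∈ S, g i
      = E (List.ofFn g) k := by
  have h := Finset.esymm_map_val g (Finset.univ : Finset (Fin n)) k
  have huv : (Finset.univ : Finset (Fin n)).val.map g = ((List.ofFn g : List K) : Multiset K) := by
    rw [Fin.univ_def]
    show Multiset.map g ((List.finRange n : List (Fin n)) : Multiset (Fin n)) = _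
    rw [Multiset.map_coe, ← List.ofFn_eq_map]
  rw [huv, esymm_coe] at h
  rw [← h]

lemma lhs_eq (l : List K) :
    ∑ k ∈ Finset.range (l.length + 1),
      ((E l k)^2 - (if k = 0 then 0 else E l (k-1)) * E l (k+1)) = A l 0 - A l 2 := by
  rw [Finset.sum_sub_distrib]
  congr 1
  · rw [A]
    apply Finset.sum_congr rfl
    intro k _
    rw [show (k:ℤ) + 0 = (k:ℤ) from by ring, Ez_natCast]
    ring
  · have hA2 : A l 2 = ∑ k ∈ Finset.range (l.length + 1), E l k * E l (k+2) := by
      rw [A]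
      apply Finset.sum_congr rfl
      intro k _
      rw [show (k:ℤ) + 2 = ((k+2:ℕ):ℤ) from by push_cast; ring, Ez_natCast, Ez_natCast]
    rw [hA2, Finset.sum_range_succ', Finset.sum_range_succ, if_pos rfl, zero_mul, add_zero,
      E_eq_zero (show l.length < l.length + 2 from by omega), mul_zero, add_zero]
    apply Finset.sum_congr rfl
    intro i _
    rw [if_neg (Nat.succ_ne_zero _), Nat.succ_sub_one, show i + 1 + 1 = i + 2 from rfl]

lemma rhs_eq (l : List K) :
    ∑ k ∈ Finset.range (l.length + 1), ((B 0 k : ℤ) : K) * D l ((0:ℤ) + 2*(k:ℤ))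
      = ∑ k ∈ Finset.range (l.length / 2 + 1),
          (catalan k : K) * E (l.map fun x => x + x⁻¹) (l.length - 2*k) := by
  rw [← Finset.sum_subset (Finset.range_subset_range.mpr (by omega :
      l.length / 2 + 1 ≤ l.length + 1))]
  · apply Finset.sum_congr rfl
    intro k hk
    rw [Finset.mem_range] at hk
    have h2k : 2 * k ≤ l.length := by omega
    rw [B_zero_left]
    congr 1
    · push_cast
      ring
    · rw [D, show (l.length : ℤ) - ((0:ℤ) + 2*(k:ℤ)) = ((l.length - 2*k : ℕ) : ℤ) from by
        push_cast [h2k]; ring, Ez_natCast]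
  · intro x hx hnx
    rw [Finset.mem_range] at hx
    rw [Finset.mem_range, not_lt] at hnx
    rw [D_eq_zero_of_lt (by push_cast; omega), mul_zero]

end Stmt3Aux

open Stmt3Aux in
theorem stmt3 (K : Type*) [Field K] (n : ℕ) (z : Fin n → K) (hz : ∀ i, z i ≠ 0) :
    (∑ k ∈ Finset.range (n + 1),
        ((∑ S ∈ Finset.univ.powersetCard k, ∏ i ∈ S, z i) ^ 2 -
          (if k = 0 then 0 else ∑ S ∈ Finset.univ.powersetCard (k - 1), ∏ i ∈ S, z i) *
            ∑ S ∈ Finset.univ.powersetCard (k + 1), ∏ i ∈ S, z i)) =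
      (∑ S ∈ Finset.univ.powersetCard n, ∏ i ∈ S, z i) *
        ∑ k ∈ Finset.range (n / 2 + 1),
          (catalan k : K) *
            ∑ S ∈ Finset.univ.powersetCard (n - 2 * k), ∏ i ∈ S, (z i + (z i)⁻¹) := by
  have hE : ∀ k, ∑ S ∈ Finset.univ.powersetCard k, ∏ i ∈ S, z i = E (List.ofFn z) k :=
    fun k => sum_powersetCard n k z
  have hW : ∀ k, ∑ S ∈ Finset.univ.powersetCard k, ∏ i ∈ S, (z i + (z i)⁻¹)
      = E ((List.ofFn z).map fun x => x + x⁻¹) k := by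
    intro k
    rw [sum_powersetCard n k (fun i => z i + (z i)⁻¹), List.map_ofFn]
    rfl
  simp only [hE, hW]
  have hlen : (List.ofFn z).length = n := List.length_ofFn
  have L := lhs_eq (l := List.ofFn z)
  rw [hlen] at L
  rw [L]
  have hEn : E (List.ofFn z) n = (List.ofFn z).prod := by
    have h := E_length (List.ofFn z)
    rwa [hlen] at h
  rw [hEn]
  have hnz : ∀ x ∈ List.ofFn z, x ≠ 0 := by
    intro x hx
    obtain ⟨i, rfl⟩ := List.mem_ofFn.mp hx
    exact hz i
  have hk := key (List.ofFn z) hnz 0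
  push_cast at hk
  rw [hlen] at hk
  rw [hk]
  congr 1
  have R := rhs_eq (l := List.ofFn z)
  rw [hlen] at R
  exact R
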